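/- arXiv:2002.01405 — 3 statements merged into one kernel-verified Lean document; each statement's English description precedes it below -/
import Mathlib

section
/- Let (X,d) be a countable discrete metric space with a partition X = A ⊔ B such that for every R > 0 the sets {x ∈ A : d(x,B) < R} and {x ∈ B : d(x,A) < R} are finite. Write each bounded operator T on ℓ²(X) = ℓ²(A) ⊕ ℓ²(B) as a 2×2 block matrix (T_{ij}). Then for every T ∈ C*_u(X), the off-diagonal blocks T_{12} : ℓ²(B) → ℓ²(A) and T_{21} : ℓ²(A) → ℓ²(B) are compact operators. -/
noncomputable section

/-- `ℓ²(X)` with complex coefficients. -/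
abbrev l2 (X : Type*) : Type _ := lp (fun _ : X => ℂ) 2

/-- The standard basis vector `δ_x` of `ℓ²(X)`. -/
noncomputable def delta {X : Type*} (x : X) : l2 X :=
  letI := Classical.decEq X
  lp.single 2 x 1

/-- The matrix entry `F_{xy} = ⟨δ_x, F δ_y⟩` of a bounded operator on `ℓ²(X)`. -/
noncomputable def entry {X : Type*} (F : l2 X →L[ℂ] l2 X) (x y : X) : ℂ :=
  inner ℂ (delta x) (F (delta y))

/-- `F` has finite propagation: `sup {d(x,y) : F_{xy} ≠ 0} < ∞`. -/
def HasFiniteProp {X : Type*} [MetricSpace X] (F : l2 X →L[ℂ] l2 X) : Prop :=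
  ∃ C : ℝ, ∀ x y : X, entry F x y ≠ 0 → dist x y ≤ C

/-- The uniform Roe algebra `C*_u(X)`: the norm closure in `B(ℓ²(X))` of the set of
operators of finite propagation. -/
def uniformRoe (X : Type*) [MetricSpace X] : Set (l2 X →L[ℂ] l2 X) :=
  closure {F | HasFiniteProp F}

/-- The group of invertible elements of the uniform Roe algebra `C*_u(X)`. -/
def roeGL (X : Type*) [MetricSpace X] : Set (l2 X →L[ℂ] l2 X) :=
  {F | F ∈ uniformRoe X ∧ ∃ G ∈ uniformRoe X, F * G = 1 ∧ G * F = 1}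

/-- `X` is a Kuiper space if the group of invertible elements of `C*_u(X)` is
contractible in the norm topology. -/
def IsKuiperSpace (X : Type*) [MetricSpace X] : Prop :=
  ContractibleSpace ↥(roeGL X)

open scoped Classical

/-! ### Auxiliary material for the proof -/

open scoped ENNReal

namespace RoeAux

variable {X : Type*}

lemma delta_apply (x z : X) : (delta x : l2 X) z = if z = x then (1:ℂ) else 0 := by
  letI := Classical.decEq X
  simp only [delta, lp.single_apply]
  split_ifs with h
  · subst h; simp
  · simp [Pi.single_apply, h]

lemma inner_delta (x : X) (f : l2 X) : (inner ℂ (delta x) f : ℂ) = f x := by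
  letI := Classical.decEq X
  simp only [delta, lp.inner_single_left, RCLike.inner_apply, map_one, one_mul, mul_one]

lemma entry_eq_apply (F : l2 X →L[ℂ] l2 X) (x y : X) : entry F x y = (F (delta y)) x :=
  inner_delta x _

lemma hasSum_smul_delta (f : l2 X) : HasSum (fun y => f y • (delta y : l2 X)) f := by
  letI := Classical.decEq X
  have h := lp.hasSum_single (E := fun _ : X => ℂ) (p := 2) (by norm_num) f
  have e : ∀ y, f y • (delta y : l2 X) = lp.single 2 y (f y) := by
    intro y
    rw [show (delta y : l2 X) = lp.single 2 y 1 from rfl, ← lp.single_smul, smul_eq_mul, mul_one]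
  simpa only [e] using h

lemma ext_of_delta {S T : l2 X →L[ℂ] l2 X} (h : ∀ y, S (delta y) = T (delta y)) : S = T := by
  refine ContinuousLinearMap.ext fun f => ?_
  have hf := hasSum_smul_delta f
  have h1 : HasSum (fun y => S (f y • delta y)) (S f) := hf.mapL S
  have h2 : HasSum (fun y => S (f y • delta y)) (T f) := by
    have := hf.mapL T
    refine HasSum.congr_fun this fun y => ?_
    rw [map_smul, map_smul, h y]
  exact h1.unique h2

lemma compact_smul_delta (x : X) : IsCompactOperator (fun c : ℂ => c • (delta x : l2 X)) := by
  refine ⟨(fun c : ℂ => c • (delta x : l2 X)) '' Metric.closedBall 0 1,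
    ((isCompact_closedBall 0 1).image (continuous_id.smul continuous_const)), ?_⟩
  exact Filter.mem_of_superset (Metric.closedBall_mem_nhds 0 one_pos)
    (Set.subset_preimage_image _ _)

lemma compact_rankOne (x : X) :
    IsCompactOperator (fun f : l2 X => f x • (delta x : l2 X)) := by
  have h := (compact_smul_delta x).comp_clm (innerSL ℂ (delta x))
  have e : ((fun c : ℂ => c • (delta x : l2 X)) ∘ (innerSL ℂ (delta x))) =
      fun f : l2 X => f x • (delta x : l2 X) := by
    funext f
    simp [Function.comp, innerSL_apply_apply, inner_delta]
  rwa [e] at h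

set_option maxHeartbeats 1000000 in
lemma compact_sum_rankOne (s : Finset X) :
    IsCompactOperator (fun f : l2 X => ∑ x ∈ s, f x • (delta x : l2 X)) := by
  induction s using Finset.induction_on with
  | empty => simp only [Finset.sum_empty]; exact isCompactOperator_zero
  | insert a s hx ih =>
    simp only [Finset.sum_insert hx]
    exact (compact_rankOne _).add ih

lemma memℓp_mul (g : X → ℂ) (hg : ∀ x, ‖g x‖ ≤ 1) (f : l2 X) :
    Memℓp (fun x => g x * f x) 2 := by
  apply memℓp_gen
  have hs : Summable fun i => ‖f i‖ ^ (2:ℝ≥0∞).toReal :=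
    (lp.memℓp f).summable (by norm_num)
  refine hs.of_nonneg_of_le (fun i => ?_) (fun i => ?_)
  · positivity
  · refine Real.rpow_le_rpow (norm_nonneg _) ?_ (by norm_num)
    rw [norm_mul]
    exact mul_le_of_le_one_left (norm_nonneg _) (hg i)

def mulLM (g : X → ℂ) (hg : ∀ x, ‖g x‖ ≤ 1) : l2 X →ₗ[ℂ] l2 X where
  toFun f := ⟨fun x => g x * f x, memℓp_mul g hg f⟩
  map_add' f₁ f₂ := by
    apply lp.ext; funext x
    simp only [lp.coeFn_add, Pi.add_apply, mul_add]
  map_smul' c f := by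
    apply lp.ext; funext x
    simp only [lp.coeFn_smul, Pi.smul_apply, smul_eq_mul, RingHom.id_apply]
    show g x * (c * f x) = c * (g x * f x)
    ring

lemma mulLM_norm (g : X → ℂ) (hg : ∀ x, ‖g x‖ ≤ 1) (f : l2 X) :
    ‖mulLM g hg f‖ ≤ 1 * ‖f‖ := by
  rw [one_mul]
  refine lp.norm_le_of_tsum_le (by norm_num) (norm_nonneg f) ?_
  rw [lp.norm_rpow_eq_tsum (by norm_num : 0 < (2:ℝ≥0∞).toReal) f]
  refine Summable.tsum_le_tsum (fun i => ?_)
    ((lp.memℓp (mulLM g hg f)).summable (by norm_num))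
    ((lp.memℓp f).summable (by norm_num))
  refine Real.rpow_le_rpow (norm_nonneg _) ?_ (by norm_num)
  show ‖g i * f i‖ ≤ ‖f i‖
  rw [norm_mul]
  exact mul_le_of_le_one_left (norm_nonneg _) (hg i)

def mulOp (g : X → ℂ) (hg : ∀ x, ‖g x‖ ≤ 1) : l2 X →L[ℂ] l2 X :=
  (mulLM g hg).mkContinuous 1 (mulLM_norm g hg)

@[simp] lemma mulOp_apply (g : X → ℂ) (hg : ∀ x, ‖g x‖ ≤ 1) (f : l2 X) (x : X) :
    (mulOp g hg f) x = g x * f x := rfl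

lemma ind_norm (s : Set X) (x : X) : ‖s.indicator (fun _ => (1:ℂ)) x‖ ≤ 1 := by
  by_cases h : x ∈ s <;> simp [Set.indicator_of_mem, Set.indicator_of_notMem, h]

/-- The orthogonal projection onto `ℓ²(s)` inside `ℓ²(X)`, given as multiplication by
the indicator function of `s`. -/
def PO (s : Set X) : l2 X →L[ℂ] l2 X :=
  mulOp (s.indicator fun _ => (1:ℂ)) (ind_norm s)

lemma PO_apply (s : Set X) (f : l2 X) (x : X) :
    (PO s f) x = if x ∈ s then f x else 0 := by
  show s.indicator (fun _ => (1:ℂ)) x * f x = _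
  by_cases h : x ∈ s <;>
    simp [Set.indicator_of_mem, Set.indicator_of_notMem, h]

lemma PO_delta (s : Set X) (y : X) :
    PO s (delta y) = (if y ∈ s then (1:ℂ) else 0) • delta y := by
  apply lp.ext; funext z
  rw [lp.coeFn_smul]
  simp only [Pi.smul_apply, smul_eq_mul]
  rw [PO_apply, delta_apply]
  by_cases hz : z = y
  · subst hz; simp
  · simp [hz]

lemma PO_finite_compact (s : Set X) (hs : s.Finite) : IsCompactOperator ⇑(PO s) := by
  have e : ⇑(PO s) = fun f : l2 X => ∑ x ∈ hs.toFinset, f x • (delta x : l2 X) := by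
    funext f
    apply lp.ext; funext z
    rw [PO_apply, lp.coeFn_sum]
    simp only [Finset.sum_apply, lp.coeFn_smul, Pi.smul_apply, smul_eq_mul, delta_apply,
      mul_ite, mul_one, mul_zero]
    rw [Finset.sum_ite_eq hs.toFinset z (fun x => f x)]
    simp [Set.Finite.mem_toFinset]
  rw [e]
  exact compact_sum_rankOne _

lemma coord_block (A B : Set X) (F : l2 X →L[ℂ] l2 X) (x y : X) :
    ((PO A ∘L F ∘L PO B) (delta y)) x =
      (if x ∈ A then (1:ℂ) else 0) * (if y ∈ B then (1:ℂ) else 0) * entry F x y := by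
  show (PO A (F (PO B (delta y)))) x = _
  rw [PO_delta, map_smul, PO_apply]
  by_cases hx : x ∈ A
  · simp only [if_pos hx, lp.coeFn_smul, Pi.smul_apply, smul_eq_mul, one_mul, mul_one]
    rw [entry_eq_apply]
  · simp [hx]

lemma entry_block (A B : Set X) (F : l2 X →L[ℂ] l2 X) (x y : X) :
    entry (PO A ∘L F ∘L PO B) x y =
      if x ∈ A ∧ y ∈ B then entry F x y else 0 := by
  rw [entry_eq_apply, coord_block]
  by_cases hx : x ∈ A <;> by_cases hy : y ∈ B <;> simp [hx, hy]

lemma compact_block [MetricSpace X] (A B : Set X)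
    (hA : ∀ R : ℝ, 0 < R → {x ∈ A | Metric.infDist x B < R}.Finite)
    (F : l2 X →L[ℂ] l2 X) (hF : HasFiniteProp F) :
    IsCompactOperator ⇑(PO A ∘L F ∘L PO B) := by
  obtain ⟨C, hC⟩ := hF
  set R : ℝ := max C 0 + 1 with hRdef
  have hR : 0 < R := by
    have : (0:ℝ) ≤ max C 0 := le_max_right _ _
    linarith
  set S : Set X := {x ∈ A | Metric.infDist x B < R} with hSdef
  have hS : S.Finite := hA R hR
  have key : PO S ∘L (PO A ∘L F ∘L PO B) = PO A ∘L F ∘L PO B := by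
    apply ext_of_delta
    intro y
    apply lp.ext; funext x
    show (PO S ((PO A ∘L F ∘L PO B) (delta y))) x = ((PO A ∘L F ∘L PO B) (delta y)) x
    rw [PO_apply]
    by_cases hx : x ∈ S
    · rw [if_pos hx]
    · rw [if_neg hx]
      symm
      rw [coord_block]
      by_cases hxa : x ∈ A
      · by_cases hyb : y ∈ B
        · rw [if_pos hxa, if_pos hyb, one_mul, one_mul]
          by_contra hne
          have hd : dist x y ≤ C := hC x y hne
          have hinf : Metric.infDist x B ≤ dist x y := Metric.infDist_le_dist_of_mem hyb
          have : Metric.infDist x B < R := by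
            have : Metric.infDist x B ≤ max C 0 := le_trans (hinf.trans hd) (le_max_left _ _)
            linarith
          exact hx ⟨hxa, this⟩
        · simp [hyb]
      · simp [hxa]
  have hcomp : IsCompactOperator (⇑(PO S) ∘ ⇑(PO A ∘L F ∘L PO B)) :=
    (PO_finite_compact S hS).comp_clm _
  have : ⇑(PO S) ∘ ⇑(PO A ∘L F ∘L PO B) = ⇑(PO S ∘L (PO A ∘L F ∘L PO B)) := rfl
  rw [this, key] at hcomp
  exact hcomp

lemma aux [MetricSpace X] (A B : Set X)
    (hA : ∀ R : ℝ, 0 < R → {x ∈ A | Metric.infDist x B < R}.Finite)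
    (T : l2 X →L[ℂ] l2 X) (hT : T ∈ uniformRoe X) :
    ∃ K : l2 X →L[ℂ] l2 X, IsCompactOperator K ∧
      ∀ x y : X, entry K x y = if x ∈ A ∧ y ∈ B then entry T x y else 0 := by
  refine ⟨PO A ∘L T ∘L PO B, ?_, fun x y => entry_block A B T x y⟩
  have hcont : Continuous fun F : l2 X →L[ℂ] l2 X => PO A ∘L F ∘L PO B :=
    continuous_const.clm_comp (continuous_id.clm_comp continuous_const)
  have hsub : {F : l2 X →L[ℂ] l2 X | HasFiniteProp F} ⊆
      (fun F : l2 X →L[ℂ] l2 X => PO A ∘L F ∘L PO B) ⁻¹'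
        {G : l2 X →L[ℂ] l2 X | IsCompactOperator G} :=
    fun F hF => compact_block A B hA F hF
  have hclosed : IsClosed ((fun F : l2 X →L[ℂ] l2 X => PO A ∘L F ∘L PO B) ⁻¹'
      {G : l2 X →L[ℂ] l2 X | IsCompactOperator G}) :=
    isClosed_setOf_isCompactOperator.preimage hcont
  exact closure_minimal hsub hclosed hT

end RoeAux

/-- Let `X = A ⊔ B` be a partition such that for every `R > 0` the
sets `{x ∈ A : d(x,B) < R}` and `{x ∈ B : d(x,A) < R}` are finite. Then for every
`T ∈ C*_u(X)` the off-diagonal blocks `T₁₂ = P_A T P_B` and `T₂₁ = P_B T P_A` (described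
here by their matrix entries) are compact operators. -/
theorem offdiag_blocks_compact (X : Type*) [MetricSpace X] [Countable X]
    [DiscreteTopology X] (A B : Set X)
    (hUnion : A ∪ B = Set.univ) (hDisj : A ∩ B = ∅)
    (hA : ∀ R : ℝ, 0 < R → {x ∈ A | Metric.infDist x B < R}.Finite)
    (hB : ∀ R : ℝ, 0 < R → {x ∈ B | Metric.infDist x A < R}.Finite)
    (T : l2 X →L[ℂ] l2 X) (hT : T ∈ uniformRoe X) :
    (∃ K : l2 X →L[ℂ] l2 X, IsCompactOperator K ∧
      ∀ x y : X, entry K x y = if x ∈ A ∧ y ∈ B then entry T x y else 0) ∧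
    (∃ K : l2 X →L[ℂ] l2 X, IsCompactOperator K ∧
      ∀ x y : X, entry K x y = if x ∈ B ∧ y ∈ A then entry T x y else 0) :=
  ⟨RoeAux.aux A B hA T hT, RoeAux.aux B A hB T hT⟩
end
end

section
/- Let X = ℤ with the metric d(n,m) = |k(n) − k(m)| + 1 for n ≠ m (and d(n,n) = 0), where k(n) = ⌊log₂(|n|+1)⌋ for n ≥ 0 and k(n) = −⌊log₂(|n|+1)⌋ for n < 0. Then (X,d) does not satisfy the Følner property: there exists R > 0 (one may take R = 3) such that every finite nonempty subset F ⊆ X satisfies |∂_R F| ≥ |F|/4. -/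
noncomputable section

/-- The level function `k : ℤ → ℤ`, `k(n) = ⌊log₂(|n|+1)⌋` for `n ≥ 0` and
`k(n) = −⌊log₂(|n|+1)⌋` for `n < 0`. -/
def kLevel (n : ℤ) : ℤ :=
  if 0 ≤ n then (Nat.log 2 (n.natAbs + 1) : ℤ) else -(Nat.log 2 (n.natAbs + 1) : ℤ)

/-- The integers equipped with the metric `d(n,m) = |k(n) − k(m)| + 1` for `n ≠ m`. -/
def ZExp : Type := ℤ

/-- The canonical identification `ℤ → ZExp`. -/
def toZExp (n : ℤ) : ZExp := n

instance : DecidableEq ZExp := inferInstanceAs (DecidableEq ℤ)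
instance : Countable ZExp := inferInstanceAs (Countable ℤ)

/-- The metric `d(n,m) = |k(n) − k(m)| + 1` for `n ≠ m`, and `d(n,n) = 0`. -/
noncomputable instance : MetricSpace ZExp where
  dist n m := if n = m then 0 else ((|kLevel n - kLevel m| : ℤ) : ℝ) + 1
  dist_self n := by simp
  dist_comm n m := by
    rcases eq_or_ne n m with h | h
    · subst h; rfl
    · simp only [if_neg h, if_neg (Ne.symm h), abs_sub_comm]
  dist_triangle a b c := by
    try dsimp only
    rcases eq_or_ne a c with hac | hac
    · rw [if_pos hac]
      have h1 : (0:ℝ) ≤ if a = b then (0:ℝ) else ((|kLevel a - kLevel b| : ℤ) : ℝ) + 1 := by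
        split
        · exact le_refl 0
        · positivity
      have h2 : (0:ℝ) ≤ if b = c then (0:ℝ) else ((|kLevel b - kLevel c| : ℤ) : ℝ) + 1 := by
        split
        · exact le_refl 0
        · positivity
      linarith
    · rw [if_neg hac]
      rcases eq_or_ne a b with hab | hab
      · subst hab
        rw [if_pos rfl, if_neg hac]
        linarith
      · rcases eq_or_ne b c with hbc | hbc
        · subst hbc
          rw [if_neg hab, if_pos rfl]
          linarith
        · rw [if_neg hab, if_neg hbc]
          have h := abs_sub_le (kLevel a) (kLevel b) (kLevel c)
          have h' : ((|kLevel a - kLevel c| : ℤ) : ℝ) ≤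
              ((|kLevel a - kLevel b| : ℤ) : ℝ) + ((|kLevel b - kLevel c| : ℤ) : ℝ) := by
            exact_mod_cast h
          linarith
  eq_of_dist_eq_zero := by
    intro a b h
    by_contra hne
    try dsimp only at h
    rw [if_neg hne] at h
    have h0 : (0:ℝ) ≤ ((|kLevel a - kLevel b| : ℤ) : ℝ) := by positivity
    linarith

/-- The `R`-boundary `∂_R Y = {x ∈ X : d(x,Y) < R, d(x,X∖Y) < R}` of a subset `Y`. -/
def rBoundary {X : Type*} [MetricSpace X] (R : ℝ) (Y : Set X) : Set X :=
  {x : X | Metric.infDist x Y < R ∧ Metric.infDist x Yᶜ < R}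

/-- The Følner property: for every `R > 0` and `ε > 0` there is a finite nonempty
subset `F ⊆ X` with `|∂_R F| < ε·|F|`. -/
def HasFoelnerProp (X : Type*) [MetricSpace X] : Prop :=
  ∀ R : ℝ, 0 < R → ∀ ε : ℝ, 0 < ε → ∃ F : Set X, F.Finite ∧ F.Nonempty ∧
    ((rBoundary R F).ncard : ℝ) < ε * (F.ncard : ℝ)

/-- The identity `ZExp → ℤ`. -/
def unZ : ZExp → ℤ := fun n => n

lemma natAbs_kLevel (n : ℤ) : (kLevel n).natAbs = Nat.log 2 (n.natAbs + 1) := by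
  unfold kLevel; split <;> simp

lemma kLevel_nonneg {n : ℤ} (h : 0 ≤ n) : 0 ≤ kLevel n := by
  unfold kLevel; rw [if_pos h]; positivity

lemma kLevel_neg {n : ℤ} (h : n < 0) : kLevel n ≤ -1 := by
  have h1 : 0 < Nat.log 2 (n.natAbs + 1) := Nat.log_pos (by norm_num) (by omega)
  unfold kLevel; rw [if_neg (not_le.2 h)]; omega

lemma kLevel_shift_pos {n : ℤ} {c : ℕ} (hn : 0 ≤ n) (hK : kLevel n ≤ (c : ℤ)) :
    kLevel (n + 2 ^ (c + 1) - 1) = (c : ℤ) + 1 := by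
  have hlog : Nat.log 2 (n.natAbs + 1) ≤ c := by
    have := kLevel_nonneg hn
    unfold kLevel at hK; rw [if_pos hn] at hK; exact_mod_cast hK
  have hlt : n.natAbs + 1 < 2 ^ (c + 1) := by
    by_contra hcon
    push_neg at hcon
    have h2 := Nat.log_mono_right (b := 2) hcon
    rw [Nat.log_pow (by norm_num)] at h2
    omega
  have hna : n.natAbs = n.toNat := by omega
  have hv : 0 ≤ n + 2 ^ (c + 1) - 1 := by
    have : (1:ℤ) ≤ 2 ^ (c+1) := one_le_pow₀ (by norm_num)
    omega
  have hva : (n + 2 ^ (c + 1) - 1).natAbs = n.toNat + 2 ^ (c + 1) - 1 := by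
    have : ((2:ℤ) ^ (c+1)) = ((2 ^ (c+1) : ℕ) : ℤ) := by push_cast; ring
    omega
  unfold kLevel
  rw [if_pos hv, hva]
  have h1 : n.toNat + 2 ^ (c + 1) - 1 + 1 = n.toNat + 2 ^ (c + 1) := by
    have : 1 ≤ 2 ^ (c+1) := Nat.one_le_two_pow
    omega
  rw [h1]
  have hlogv : Nat.log 2 (n.toNat + 2 ^ (c + 1)) = c + 1 := by
    apply Nat.log_eq_of_pow_le_of_lt_pow
    · omega
    · have : n.toNat + 1 < 2 ^ (c+1) := by omega
      have h2 : 2 ^ (c + 1 + 1) = 2 ^ (c+1) + 2 ^ (c+1) := by ring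
      omega
  rw [hlogv]; push_cast; ring

lemma kLevel_shift_neg {n : ℤ} {J : ℕ} (hn : n < 0) (hK : -(J : ℤ) ≤ kLevel n) :
    kLevel (n - (2 ^ (J + 1) - 1)) = -((J : ℤ) + 1) := by
  have hlog : Nat.log 2 (n.natAbs + 1) ≤ J := by
    unfold kLevel at hK; rw [if_neg (not_le.2 hn)] at hK
    omega
  have hlt : n.natAbs + 1 < 2 ^ (J + 1) := by
    by_contra hcon
    push_neg at hcon
    have h2 := Nat.log_mono_right (b := 2) hcon
    rw [Nat.log_pow (by norm_num)] at h2
    omega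
  have hv : n - (2 ^ (J + 1) - 1) < 0 := by
    have : (1:ℤ) ≤ 2 ^ (J+1) := one_le_pow₀ (by norm_num)
    omega
  have hva : (n - (2 ^ (J + 1) - 1)).natAbs = n.natAbs + 2 ^ (J + 1) - 1 := by
    have : ((2:ℤ) ^ (J+1)) = ((2 ^ (J+1) : ℕ) : ℤ) := by push_cast; ring
    omega
  unfold kLevel
  rw [if_neg (not_le.2 hv), hva]
  have h1 : n.natAbs + 2 ^ (J + 1) - 1 + 1 = n.natAbs + 2 ^ (J + 1) := by
    have : 1 ≤ 2 ^ (J+1) := Nat.one_le_two_pow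
    omega
  rw [h1]
  have hlogv : Nat.log 2 (n.natAbs + 2 ^ (J + 1)) = J + 1 := by
    apply Nat.log_eq_of_pow_le_of_lt_pow
    · omega
    · have h2 : 2 ^ (J + 1 + 1) = 2 ^ (J+1) + 2 ^ (J+1) := by ring
      omega
  rw [hlogv]; push_cast; ring

lemma fiber_finite_int (j : ℤ) : {n : ℤ | kLevel n = j}.Finite := by
  apply Set.Finite.subset (Set.finite_Icc (-(2 ^ (j.natAbs + 1) : ℤ)) (2 ^ (j.natAbs + 1)))
  intro x hx
  have hx' : kLevel x = j := hx
  have h1 : x.natAbs + 1 < 2 ^ (j.natAbs + 1) := by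
    rw [← hx', natAbs_kLevel]
    exact Nat.lt_pow_succ_log_self (by norm_num) _
  have h2 : ((2:ℤ) ^ (j.natAbs + 1)) = ((2 ^ (j.natAbs + 1) : ℕ) : ℤ) := by push_cast; ring
  constructor <;> omega

lemma zexp_dist_def (x y : ZExp) :
    dist x y = if x = y then 0 else ((|kLevel x - kLevel y| : ℤ) : ℝ) + 1 := rfl

lemma zexp_dist_lt_three {x y : ZExp} (h : |kLevel x - kLevel y| ≤ 1) : dist x y < 3 := by
  rw [zexp_dist_def]
  split
  · norm_num
  · have h1 : ((|kLevel x - kLevel y| : ℤ) : ℝ) ≤ 1 := by exact_mod_cast h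
    linarith

lemma zexp_fiber_finite (j : ℤ) : {x : ZExp | kLevel x = j}.Finite :=
  fiber_finite_int j

lemma fiber_subset_boundary {F : Set ZExp} {j : ℤ}
    (hj : ∀ x ∈ F, kLevel x ≠ j) {y : ZExp} (hy : y ∈ F) (hd : |j - kLevel y| ≤ 1) :
    {x : ZExp | kLevel x = j} ⊆ rBoundary 3 F := by
  intro x hx
  have hx' : kLevel x = j := hx
  have hxF : x ∉ F := fun h => hj x h hx'
  constructor
  · have h1 : Metric.infDist x F ≤ dist x y := Metric.infDist_le_dist_of_mem hy
    have h2 : dist x y < 3 := zexp_dist_lt_three (by rw [hx']; exact hd)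
    linarith
  · have h3 : Metric.infDist x Fᶜ = 0 := Metric.infDist_zero_of_mem hxF
    rw [h3]; norm_num

lemma boundary_finite {F : Set ZExp} (hfin : F.Finite) (hne : F.Nonempty) :
    (rBoundary 3 F).Finite := by
  have hsub : rBoundary 3 F ⊆ ⋃ y ∈ F, ({x : ZExp | kLevel x = kLevel y - 1} ∪
      {x : ZExp | kLevel x = kLevel y} ∪ {x : ZExp | kLevel x = kLevel y + 1}) := by
    intro x hx
    obtain ⟨y, hyF, hxy⟩ := (Metric.infDist_lt_iff hne).mp hx.1
    refine Set.mem_biUnion hyF ?_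
    rw [zexp_dist_def] at hxy
    by_cases hxe : x = y
    · subst hxe; simp
    · rw [if_neg hxe] at hxy
      have h1 : ((|kLevel x - kLevel y| : ℤ) : ℝ) < 2 := by linarith
      have h2 : |kLevel x - kLevel y| < 2 := by exact_mod_cast h1
      have h3 := abs_lt.mp h2
      simp only [Set.mem_union, Set.mem_setOf_eq]
      omega
  exact Set.Finite.subset (hfin.biUnion fun y _ =>
    ((fiber_finite_int _).union (fiber_finite_int _)).union (fiber_finite_int _)) hsub

lemma zexp_main (F : Set ZExp) (hfin : F.Finite) (hne : F.Nonempty) :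
    F.ncard ≤ (rBoundary 3 F).ncard := by
  classical
  have hTne : (hfin.toFinset.image kLevel).Nonempty :=
    Finset.Nonempty.image (by exact hfin.toFinset_nonempty.mpr hne) _
  set T : Finset ℤ := hfin.toFinset.image kLevel with hTdef
  set K : ℤ := T.max' hTne with hKdef
  set m : ℤ := T.min' hTne with hmdef
  have hmem : ∀ x ∈ F, kLevel x ∈ T := fun x hx =>
    Finset.mem_image_of_mem _ (hfin.mem_toFinset.mpr hx)
  have hK : ∀ x ∈ F, kLevel x ≤ K := fun x hx => Finset.le_max' T _ (hmem x hx)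
  have hm : ∀ x ∈ F, m ≤ kLevel x := fun x hx => Finset.min'_le T _ (hmem x hx)
  obtain ⟨yK, hyKF, hyK⟩ : ∃ y ∈ F, kLevel y = K := by
    obtain ⟨y, hy, hy2⟩ := Finset.mem_image.mp (T.max'_mem hTne)
    exact ⟨y, hfin.mem_toFinset.mp hy, hy2⟩
  obtain ⟨ym, hymF, hym⟩ : ∃ y ∈ F, kLevel y = m := by
    obtain ⟨y, hy, hy2⟩ := Finset.mem_image.mp (T.min'_mem hTne)
    exact ⟨y, hfin.mem_toFinset.mp hy, hy2⟩
  set A : Set ZExp := {x : ZExp | kLevel x = K + 1} with hAdef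
  set B : Set ZExp := {x : ZExp | kLevel x = m - 1} with hBdef
  have hA : A ⊆ rBoundary 3 F :=
    fiber_subset_boundary (fun x hx => by have := hK x hx; omega) hyKF
      (by rw [hyK, show K + 1 - K = 1 by ring]; norm_num)
  have hB : B ⊆ rBoundary 3 F :=
    fiber_subset_boundary (fun x hx => by have := hm x hx; omega) hymF
      (by rw [hym, show m - 1 - m = -1 by ring]; norm_num)
  set ψ : ℤ → ℤ := fun n =>
    if 0 ≤ n then n + (2 ^ (K + 1).toNat - 1) else n - (2 ^ ((1 - m).toNat) - 1) with hψdef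
  set φ : ZExp → ZExp := fun a => toZExp (ψ (unZ a)) with hφdef
  have hmaps : ∀ a ∈ F, φ a ∈ A ∪ B := by
    intro a ha
    by_cases h0 : 0 ≤ unZ a
    · left
      have hk0 : 0 ≤ kLevel (unZ a) := kLevel_nonneg h0
      have hK0 : 0 ≤ K := le_trans hk0 (hK a ha)
      have htn : (K + 1).toNat = K.toNat + 1 := by omega
      have hKa : kLevel (unZ a) ≤ ((K.toNat : ℕ) : ℤ) := by
        have hh : kLevel (unZ a) ≤ K := hK a ha; omega
      have hs := kLevel_shift_pos h0 hKa
      have hψa : ψ (unZ a) = unZ a + 2 ^ (K.toNat + 1) - 1 := by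
        rw [hψdef]; simp only [if_pos h0]; rw [htn]; ring
      show kLevel (ψ (unZ a)) = K + 1
      rw [hψa, hs]; omega
    · right
      push_neg at h0
      have hk1 : kLevel (unZ a) ≤ -1 := kLevel_neg h0
      have hm1 : m ≤ -1 := le_trans (hm a ha) hk1
      set J : ℕ := (-m).toNat with hJdef
      have hJm : -(J : ℤ) = m := by omega
      have htn : (1 - m).toNat = J + 1 := by omega
      have hKa : -(J : ℤ) ≤ kLevel (unZ a) := by rw [hJm]; exact hm a ha
      have hs := kLevel_shift_neg h0 hKa
      have hψa : ψ (unZ a) = unZ a - (2 ^ (J + 1) - 1) := by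
        rw [hψdef]; simp only [if_neg (not_le.2 h0)]; rw [htn]
      show kLevel (ψ (unZ a)) = m - 1
      rw [hψa, hs]; omega
  have hinj : Set.InjOn φ F := by
    obtain ⟨P, hP⟩ : ∃ P : ℤ, P = 2 ^ (K + 1).toNat := ⟨_, rfl⟩
    obtain ⟨Q, hQ⟩ : ∃ Q : ℤ, Q = 2 ^ ((1 - m).toNat) := ⟨_, rfl⟩
    have hP1 : (1 : ℤ) ≤ P := by rw [hP]; exact one_le_pow₀ (by norm_num)
    have hQ1 : (1 : ℤ) ≤ Q := by rw [hQ]; exact one_le_pow₀ (by norm_num)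
    intro a _ b _ hab
    have hab' : ψ (unZ a) = ψ (unZ b) := hab
    rw [hψdef] at hab'
    simp only [← hP, ← hQ] at hab'
    have hgoal : unZ a = unZ b := by
      by_cases h0a : 0 ≤ unZ a <;> by_cases h0b : 0 ≤ unZ b <;>
        simp only [h0a, h0b, if_true, if_false, if_pos, if_neg, not_false_iff] at hab' <;>
        omega
    exact hgoal
  calc F.ncard ≤ (A ∪ B).ncard := by
        exact Set.ncard_le_ncard_of_injOn φ hmaps hinj
          ((zexp_fiber_finite _).union (zexp_fiber_finite _))
    _ ≤ (rBoundary 3 F).ncard :=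
        Set.ncard_le_ncard (Set.union_subset hA hB) (boundary_finite hfin hne)

/-- The space `ℤ` with the metric `d(n,m) = |k(n) − k(m)| + 1`
(`n ≠ m`) does not satisfy the Følner property: there is an `R > 0` such that every
finite nonempty subset `F` satisfies `|∂_R F| ≥ |F|/4`. -/
theorem zExp_not_foelner :
    ¬ HasFoelnerProp ZExp ∧
    ∃ R : ℝ, 0 < R ∧ ∀ F : Set ZExp, F.Finite → F.Nonempty →
      (F.ncard : ℝ) / 4 ≤ ((rBoundary R F).ncard : ℝ) := by
  have main : ∀ F : Set ZExp, F.Finite → F.Nonempty →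
      (F.ncard : ℝ) / 4 ≤ ((rBoundary 3 F).ncard : ℝ) := by
    intro F hfin hne
    have h := zexp_main F hfin hne
    have h' : (F.ncard : ℝ) ≤ ((rBoundary 3 F).ncard : ℝ) := by exact_mod_cast h
    have h0 : (0 : ℝ) ≤ (F.ncard : ℝ) := by positivity
    linarith
  refine ⟨?_, 3, by norm_num, main⟩
  intro h
  obtain ⟨F, hfin, hne, hlt⟩ := h 3 (by norm_num) (1/4) (by norm_num)
  have h1 := main F hfin hne
  have hpos : 0 < F.ncard := (Set.ncard_pos hfin).mpr hne
  have h2 : (0 : ℝ) < (F.ncard : ℝ) := by exact_mod_cast hpos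
  linarith
end
end

section
/- Let X = ℤ with the metric d(n,m) = |k(n) − k(m)| + 1 for n ≠ m (and d(n,n) = 0), where k(n) = ⌊log₂(|n|+1)⌋ for n ≥ 0 and k(n) = −⌊log₂(|n|+1)⌋ for n < 0, and let β : ℤ → ℤ be β(n) = ⌊n/2⌋ (integer floor division). Then: (1) for every n ∈ ℤ, the preimage β⁻¹({n}) = {2n, 2n+1} consists of exactly two points; and (2) d(β(n), n) ≤ 2 for every n ∈ ℤ. -/
noncomputable section

lemma log2_sandwich {x y : ℕ} (hy : 0 < y) (h1 : y ≤ x) (h2 : x ≤ 2 * y) :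
    Nat.log 2 y ≤ Nat.log 2 x ∧ Nat.log 2 x ≤ Nat.log 2 y + 1 := by
  refine ⟨Nat.log_mono_right h1, ?_⟩
  calc Nat.log 2 x ≤ Nat.log 2 (y * 2) := Nat.log_mono_right (by omega)
    _ = Nat.log 2 y + 1 := Nat.log_mul_base (by norm_num) (by omega)

/-- For `ℤ` with the metric `d(n,m) = |k(n) − k(m)| + 1` (`n ≠ m`)
and `β(n) = ⌊n/2⌋`: (1) every fiber `β⁻¹({n}) = {2n, 2n+1}` has exactly two points, and
(2) `d(β(n), n) ≤ 2` for all `n`. -/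
theorem zExp_halving_map_properties :
    (∀ n : ℤ, (fun m : ℤ => m / 2) ⁻¹' {n} = {2 * n, 2 * n + 1} ∧
      ((fun m : ℤ => m / 2) ⁻¹' {n}).ncard = 2) ∧
    (∀ n : ℤ, dist (toZExp (n / 2)) (toZExp n) ≤ 2) := by
  constructor
  · intro n
    constructor
    · ext m
      simp only [Set.mem_preimage, Set.mem_singleton_iff, Set.mem_insert_iff]
      omega
    · have : (fun m : ℤ => m / 2) ⁻¹' {n} = {2 * n, 2 * n + 1} := by
        ext m
        simp only [Set.mem_preimage, Set.mem_singleton_iff, Set.mem_insert_iff]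
        omega
      rw [this, Set.ncard_pair (by omega)]
  · intro n
    show (if toZExp (n / 2) = toZExp n then (0:ℝ)
        else ((|kLevel (n / 2) - kLevel n| : ℤ) : ℝ) + 1) ≤ 2
    split
    · norm_num
    · have hk : |kLevel (n / 2) - kLevel n| ≤ 1 := by
        rcases le_or_gt 0 n with hn | hn
        · have hq : 0 ≤ n / 2 := by omega
          have habs : (n / 2).natAbs = n.natAbs / 2 := by omega
          have := log2_sandwich (x := n.natAbs + 1) (y := n.natAbs / 2 + 1)
            (by omega) (by omega) (by omega)
          simp only [kLevel, if_pos hn, if_pos hq, habs]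
          rw [abs_le]
          omega
        · have hq : ¬ (0 ≤ n / 2) := by omega
          have habs : (n / 2).natAbs = (n.natAbs + 1) / 2 := by omega
          have := log2_sandwich (x := n.natAbs + 1) (y := (n.natAbs + 1) / 2 + 1)
            (by omega) (by omega) (by omega)
          simp only [kLevel, if_neg (by omega : ¬ (0 ≤ n)), if_neg hq, habs]
          rw [abs_le]
          omega
      have : ((|kLevel (n / 2) - kLevel n| : ℤ) : ℝ) ≤ 1 := by exact_mod_cast hk
      linarith
end
end
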